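/- Let q be a real number with 0 < q < 1 and let k ≥ 0 and s ≥ 0 be integers. Then T_3(k,s) = (Π_k(q²)/Π_{2k+1}(q)) · (1 − q − q^{3s+3} · ∑_{j=0}^{k−1} q^{2j} · Π_{2j+1}(q)·Π_{j+s}(q²) / (Π_j(q²)² · Π_s(q²))). -/

import Mathlib

set_option maxHeartbeats 1000000

/-- `Π_n(t) = ∏_{j=1}^n (1 - t^j)`. -/
noncomputable def PiProd (n : ℕ) (t : ℝ) : ℝ :=
  ∏ j ∈ Finset.range n, (1 - t ^ (j + 1))

/-- `T_β(k,s)`: equal to `1` if `k = 0`, and to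
`∑_{j=0}^{s} q^{βj} · Π_{k+j−1}(q²) / (Π_j(q²) · Π_{k−1}(q²))` if `k ≥ 1`. -/
noncomputable def T (q : ℝ) (β k s : ℕ) : ℝ :=
  if k = 0 then 1
  else ∑ j ∈ Finset.range (s + 1),
    q ^ (β * j) * PiProd (k + j - 1) (q ^ 2) / (PiProd j (q ^ 2) * PiProd (k - 1) (q ^ 2))

lemma PiProd_succ' (n : ℕ) (t : ℝ) :
    PiProd (n + 1) t = PiProd n t * (1 - t ^ (n + 1)) := by
  simp [PiProd, Finset.prod_range_succ]

lemma PiProd_zero' (t : ℝ) : PiProd 0 t = 1 := by simp [PiProd]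

lemma one_sub_q_pow_ne {q : ℝ} (hq0 : 0 < q) (hq1 : q < 1) (n : ℕ) : 1 - q ^ (n + 1) ≠ 0 := by
  have : q ^ (n+1) < 1 := pow_lt_one₀ hq0.le hq1 (Nat.succ_ne_zero n)
  linarith

lemma one_sub_q2_pow_ne {q : ℝ} (hq0 : 0 < q) (hq1 : q < 1) (n : ℕ) :
    1 - (q ^ 2) ^ (n + 1) ≠ 0 := by
  have h2 : q ^ 2 < 1 := by nlinarith
  have : (q ^ 2) ^ (n+1) < 1 := pow_lt_one₀ (by positivity) h2 (Nat.succ_ne_zero n)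
  linarith

lemma one_sub_ne {q : ℝ} (hq0 : 0 < q) (hq1 : q < 1) (n : ℕ) (hn : n ≠ 0) :
    1 - q ^ n ≠ 0 := by
  have : q ^ n < 1 := pow_lt_one₀ hq0.le hq1 hn
  linarith

lemma PiProd_q_pos {q : ℝ} (hq0 : 0 < q) (hq1 : q < 1) (n : ℕ) : 0 < PiProd n q := by
  apply Finset.prod_pos
  intro j _
  have : q ^ (j+1) < 1 := pow_lt_one₀ hq0.le hq1 (Nat.succ_ne_zero j)
  linarith

lemma PiProd_q2_pos {q : ℝ} (hq0 : 0 < q) (hq1 : q < 1) (n : ℕ) : 0 < PiProd n (q ^ 2) := by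
  apply Finset.prod_pos
  intro j _
  have h2 : q ^ 2 < 1 := by nlinarith
  have : (q ^ 2) ^ (j+1) < 1 := pow_lt_one₀ (by positivity) h2 (Nat.succ_ne_zero j)
  linarith

lemma lemD {q : ℝ} (hq0 : 0 < q) (hq1 : q < 1) (n : ℕ) :
    1 - q - q ^ 3 * ∑ j ∈ Finset.range n,
      q ^ (2*j) * PiProd (2*j+1) q * PiProd j (q^2) / PiProd j (q^2) ^ 2
    = PiProd (2*n+1) q / PiProd n (q^2) := by
  induction n with
  | zero =>
    simp [PiProd]
  | succ n ih =>
    have hPn := (PiProd_q2_pos hq0 hq1 n).ne'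
    rw [eq_div_iff hPn] at ih
    rw [Finset.sum_range_succ]
    have e1 : 2*(n+1)+1 = (2*n+1)+1+1 := by ring
    rw [e1, PiProd_succ' (2*n+1+1) q, PiProd_succ' (2*n+1) q, PiProd_succ' n (q^2), ← ih]
    field_simp [one_sub_q2_pow_ne hq0 hq1, one_sub_q_pow_ne hq0 hq1]
    ring

lemma lemC {q : ℝ} (hq0 : 0 < q) (hq1 : q < 1) (s k : ℕ) :
    (∑ j ∈ Finset.range (k+1),
        q ^ (2*j) * PiProd (2*j+1) q * PiProd (j+s) (q^2) / (PiProd j (q^2) ^ 2 * PiProd s (q^2)))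
      - q ^ 3 * (∑ j ∈ Finset.range (k+1),
        q ^ (2*j) * PiProd (2*j+1) q * PiProd (j+(s+1)) (q^2) / (PiProd j (q^2) ^ 2 * PiProd (s+1) (q^2)))
    = PiProd (2*(k+1)+1) q * PiProd (k+1+s) (q^2)
        / (PiProd (k+1) (q^2) * PiProd (s+1) (q^2) * PiProd k (q^2)) := by
  have hQ := fun n => (PiProd_q_pos hq0 hq1 n).ne'
  have hP := fun n => (PiProd_q2_pos hq0 hq1 n).ne'
  induction k with
  | zero =>
    simp only [zero_add, Finset.sum_range_one, Nat.mul_zero, pow_zero, one_mul]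
    rw [show 1+s = s+1 from by omega, PiProd_succ' s (q^2)]
    norm_num [PiProd, Finset.prod_range_succ]
    simp only [PiProd] at hP
    field_simp [hP, one_sub_q2_pow_ne hq0 hq1, one_sub_q_pow_ne hq0 hq1]
  | succ k ih =>
    have key : PiProd (2*(k+1)+1) q * PiProd (k+1+s) (q^2)
          / (PiProd (k+1) (q^2) * PiProd (s+1) (q^2) * PiProd k (q^2))
        + q ^ (2*(k+1)) * PiProd (2*(k+1)+1) q * PiProd (k+1+s) (q^2)
          / (PiProd (k+1) (q^2) ^ 2 * PiProd s (q^2))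
        - q ^ 3 * (q ^ (2*(k+1)) * PiProd (2*(k+1)+1) q * PiProd (k+1+s+1) (q^2)
          / (PiProd (k+1) (q^2) ^ 2 * PiProd (s+1) (q^2)))
        = PiProd (2*(k+1+1)+1) q * PiProd (k+1+1+s) (q^2)
          / (PiProd (k+1+1) (q^2) * PiProd (s+1) (q^2) * PiProd (k+1) (q^2)) := by
      have hD1 : PiProd (k+1) (q^2) * PiProd (s+1) (q^2) * PiProd k (q^2) ≠ 0 :=
        mul_ne_zero (mul_ne_zero (hP _) (hP _)) (hP _)
      have hD2 : PiProd (k+1) (q^2) ^ 2 * PiProd s (q^2) ≠ 0 :=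
        mul_ne_zero (pow_ne_zero _ (hP _)) (hP _)
      have hD3 : PiProd (k+1) (q^2) ^ 2 * PiProd (s+1) (q^2) ≠ 0 :=
        mul_ne_zero (pow_ne_zero _ (hP _)) (hP _)
      have hD4 : PiProd (k+1+1) (q^2) * PiProd (s+1) (q^2) * PiProd (k+1) (q^2) ≠ 0 :=
        mul_ne_zero (mul_ne_zero (hP _) (hP _)) (hP _)
      rw [div_add_div _ _ hD1 hD2, ← mul_div_assoc,
          div_sub_div _ _ (mul_ne_zero hD1 hD2) hD3,
          div_eq_div_iff (mul_ne_zero (mul_ne_zero hD1 hD2) hD3) hD4]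
      have e1 : 2*(k+1+1)+1 = (2*(k+1)+1)+1+1 := by ring
      have e2 : k+1+1+s = (k+1+s)+1 := by ring
      rw [e1, e2, PiProd_succ' (2*(k+1)+1+1) q, PiProd_succ' (2*(k+1)+1) q,
          PiProd_succ' (k+1+s) (q^2), PiProd_succ' (k+1) (q^2), PiProd_succ' s (q^2),
          PiProd_succ' k (q^2)]
      ring
    rw [Finset.sum_range_succ (fun j => q ^ (2*j) * PiProd (2*j+1) q * PiProd (j+s) (q^2)
          / (PiProd j (q^2) ^ 2 * PiProd s (q^2))) (k+1),
        Finset.sum_range_succ (fun j => q ^ (2*j) * PiProd (2*j+1) q * PiProd (j+(s+1)) (q^2)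
          / (PiProd j (q^2) ^ 2 * PiProd (s+1) (q^2))) (k+1)]
    have e3 : k+1+(s+1) = k+1+s+1 := by ring
    rw [e3]
    calc (∑ j ∈ Finset.range (k+1), q ^ (2*j) * PiProd (2*j+1) q * PiProd (j+s) (q^2)
            / (PiProd j (q^2) ^ 2 * PiProd s (q^2)))
          + q ^ (2*(k+1)) * PiProd (2*(k+1)+1) q * PiProd (k+1+s) (q^2)
            / (PiProd (k+1) (q^2) ^ 2 * PiProd s (q^2))
          - q ^ 3 * ((∑ j ∈ Finset.range (k+1), q ^ (2*j) * PiProd (2*j+1) q * PiProd (j+(s+1)) (q^2)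
            / (PiProd j (q^2) ^ 2 * PiProd (s+1) (q^2)))
            + q ^ (2*(k+1)) * PiProd (2*(k+1)+1) q * PiProd (k+1+s+1) (q^2)
            / (PiProd (k+1) (q^2) ^ 2 * PiProd (s+1) (q^2)))
        = ((∑ j ∈ Finset.range (k+1), q ^ (2*j) * PiProd (2*j+1) q * PiProd (j+s) (q^2)
            / (PiProd j (q^2) ^ 2 * PiProd s (q^2)))
          - q ^ 3 * (∑ j ∈ Finset.range (k+1), q ^ (2*j) * PiProd (2*j+1) q * PiProd (j+(s+1)) (q^2)
            / (PiProd j (q^2) ^ 2 * PiProd (s+1) (q^2))))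
          + q ^ (2*(k+1)) * PiProd (2*(k+1)+1) q * PiProd (k+1+s) (q^2)
            / (PiProd (k+1) (q^2) ^ 2 * PiProd s (q^2))
          - q ^ 3 * (q ^ (2*(k+1)) * PiProd (2*(k+1)+1) q * PiProd (k+1+s+1) (q^2)
            / (PiProd (k+1) (q^2) ^ 2 * PiProd (s+1) (q^2))) := by ring
      _ = PiProd (2*(k+1+1)+1) q * PiProd (k+1+1+s) (q^2)
          / (PiProd (k+1+1) (q^2) * PiProd (s+1) (q^2) * PiProd (k+1) (q^2)) := by
          rw [ih]; exact key


lemma lemT0 {q : ℝ} (hq0 : 0 < q) (hq1 : q < 1) (m : ℕ) : T q 3 (m+1) 0 = 1 := by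
  have h := (PiProd_q2_pos hq0 hq1 m).ne'
  rw [T, if_neg (Nat.succ_ne_zero m)]
  rw [Finset.sum_range_one]
  simp only [Nat.mul_zero, pow_zero, Nat.add_zero, Nat.add_sub_cancel, one_mul, PiProd_zero']
  exact div_self h

lemma lemA {q : ℝ} (m s : ℕ) : T q 3 (m+1) (s+1) = T q 3 (m+1) s
    + q ^ (3*(s+1)) * PiProd (m+1+s) (q^2) / (PiProd (s+1) (q^2) * PiProd m (q^2)) := by
  rw [T, T, if_neg (Nat.succ_ne_zero m), if_neg (Nat.succ_ne_zero m)]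
  rw [Finset.sum_range_succ]
  have e1 : m+1+(s+1)-1 = m+1+s := by omega
  have e2 : m+1-1 = m := by omega
  simp only [e1, e2]

theorem T_three_identity (q : ℝ) (hq0 : 0 < q) (hq1 : q < 1) (k s : ℕ) :
    T q 3 k s =
      (PiProd k (q ^ 2) / PiProd (2 * k + 1) q) *
        (1 - q - q ^ (3 * s + 3) * ∑ j ∈ Finset.range k,
          q ^ (2 * j) * PiProd (2 * j + 1) q * PiProd (j + s) (q ^ 2) /
            (PiProd j (q ^ 2) ^ 2 * PiProd s (q ^ 2))) := by
  have hQ := fun n => (PiProd_q_pos hq0 hq1 n).ne'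
  have hP := fun n => (PiProd_q2_pos hq0 hq1 n).ne'
  rcases eq_or_ne k 0 with rfl | hk
  · rw [T, if_pos rfl]
    simp only [Finset.sum_range_zero, mul_zero, sub_zero, PiProd_zero']
    rw [PiProd_succ' 0 q, PiProd_zero', pow_one, one_mul]
    have h1 : (1:ℝ) - q ≠ 0 := by linarith
    rw [one_div, inv_mul_cancel₀ h1]
  · obtain ⟨m, rfl⟩ : ∃ m, k = m + 1 := ⟨k - 1, by omega⟩
    induction s with
    | zero =>
      rw [lemT0 hq0 hq1 m]
      simp only [Nat.mul_zero, Nat.zero_add, Nat.add_zero, PiProd_zero', mul_one]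
      rw [lemD hq0 hq1 (m+1)]
      rw [div_mul_div_comm, mul_comm, div_self (mul_ne_zero (hQ _) (hP _))]
    | succ s ih =>
      rw [lemA m s, ih]
      have hC := lemC hq0 hq1 s m
      rw [sub_eq_iff_eq_add] at hC
      rw [hC]
      have hsimp : PiProd (m+1) (q^2) / PiProd (2*(m+1)+1) q *
          (PiProd (2*(m+1)+1) q * PiProd (m+1+s) (q^2)
            / (PiProd (m+1) (q^2) * PiProd (s+1) (q^2) * PiProd m (q^2)))
          = PiProd (m+1+s) (q^2) / (PiProd (s+1) (q^2) * PiProd m (q^2)) := by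
        rw [div_mul_div_comm, div_eq_div_iff (by
            exact mul_ne_zero (hQ _) (mul_ne_zero (mul_ne_zero (hP _) (hP _)) (hP _)))
          (mul_ne_zero (hP _) (hP _))]
        ring
      linear_combination (-q^(3*s+3)) * hsimp
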